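/- For a type III Weyl operator C (block form as above), one has 4 ≤ 2·rank(Č_K) ≤ rank(C) ≤ 3 + rank(Č_K) ≤ 6, and rank(Č_K) ∈ {2, 3}. -/

import Mathlib

set_option maxHeartbeats 1000000
set_option synthInstance.maxHeartbeats 400000

open Matrix

/-- Levi-Civita symbol on three indices. -/
def eps (i j k : Fin 3) : ℝ :=
  if (i = 0 ∧ j = 1 ∧ k = 2) ∨ (i = 1 ∧ j = 2 ∧ k = 0) ∨ (i = 2 ∧ j = 0 ∧ k = 1) then 1
  else if (i = 0 ∧ j = 2 ∧ k = 1) ∨ (i = 2 ∧ j = 1 ∧ k = 0) ∨ (i = 1 ∧ j = 0 ∧ k = 2) then -1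
  else 0

/-- The `3 × 3` block `Ľ` of `Č_{±K}`, encoding
`Ľ_{i[jk]} = 2 δ_{i[j} v̌_{k]} + ň_i{}^l ε_{ljk}` (contracted with the dual bivector index):
`L_{im} = Σ_k ε_{mik} v̌_k + ň_{im}`. -/
def Lmat (n : Matrix (Fin 3) (Fin 3) ℝ) (v : Fin 3 → ℝ) : Matrix (Fin 3) (Fin 3) ℝ :=
  Matrix.of fun i m => (∑ k, eps m i k * v k) + n i m

/-- `Č_K = [Ǩ Ľ]` with first column `Ǩ = -2 v̌`. -/
def CKmat (n : Matrix (Fin 3) (Fin 3) ℝ) (v : Fin 3 → ℝ) :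
    Matrix (Fin 3) (Unit ⊕ Fin 3) ℝ :=
  Matrix.of fun i j => Sum.elim (fun _ => -2 * v i) (fun m => Lmat n v i m) j

/-- `Č_{-K} = [-Ǩ Ľ]` with first column `+2 v̌`. -/
def CmKmat (n : Matrix (Fin 3) (Fin 3) ℝ) (v : Fin 3 → ℝ) :
    Matrix (Fin 3) (Unit ⊕ Fin 3) ℝ :=
  Matrix.of fun i j => Sum.elim (fun _ => 2 * v i) (fun m => Lmat n v i m) j

/-- Bivector index type: 3+4+3 block decomposition `U ⊕ W ⊕ V'`, with
`W` indexed by `Unit ⊕ Fin 3`. -/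
abbrev BivIdx := Fin 3 ⊕ (Unit ⊕ Fin 3) ⊕ Fin 3

/-- The 5D type III Weyl operator: block lower-triangular with zero diagonal blocks,
blocks `Č_Kᵗ : U → W`, `Ȟ : U → V'`, `Č_{-K} : W → V'`. -/
def weylIII (n : Matrix (Fin 3) (Fin 3) ℝ) (v : Fin 3 → ℝ)
    (H : Matrix (Fin 3) (Fin 3) ℝ) : Matrix BivIdx BivIdx ℝ :=
  Matrix.of fun i j =>
    match i, j with
    | Sum.inr (Sum.inl w), Sum.inl u => CKmat n v u w
    | Sum.inr (Sum.inr a), Sum.inl u => H a u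
    | Sum.inr (Sum.inr a), Sum.inr (Sum.inl w) => CmKmat n v a w
    | _, _ => 0

/-- Selector matrix of a map between index types. -/
def sel {α β : Type*} [DecidableEq α] (f : β → α) : Matrix α β ℝ :=
  Matrix.of fun a b => if a = f b then 1 else 0

lemma mul_sel_apply {α β γ : Type*} [Fintype α] [DecidableEq α] (M : Matrix γ α ℝ)
    (f : β → α) (i : γ) (b : β) : (M * sel f) i b = M i (f b) := by
  simp [Matrix.mul_apply, sel, Matrix.of_apply, eq_comm]

lemma selT_mul_apply {α β γ : Type*} [Fintype α] [DecidableEq α] (M : Matrix α γ ℝ)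
    (f : β → α) (b : β) (j : γ) : ((sel f)ᵀ * M) b j = M (f b) j := by
  simp [Matrix.mul_apply, sel, Matrix.of_apply]

/-- Subadditivity of matrix rank. -/
lemma rank_add_le' {m n : Type*} [Fintype m] [Fintype n] (A B : Matrix m n ℝ) :
    (A + B).rank ≤ A.rank + B.rank := by
  classical
  have h : LinearMap.range (A + B).mulVecLin ≤
      LinearMap.range A.mulVecLin ⊔ LinearMap.range B.mulVecLin := by
    rintro x ⟨y, rfl⟩
    have : (A + B).mulVecLin y = A.mulVecLin y + B.mulVecLin y := by
      simp [Matrix.mulVecLin_apply, Matrix.add_mulVec]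
    rw [this]
    exact Submodule.add_mem_sup ⟨y, rfl⟩ ⟨y, rfl⟩
  calc (A + B).rank ≤ Module.finrank ℝ
        (LinearMap.range A.mulVecLin ⊔ LinearMap.range B.mulVecLin : Submodule ℝ (m → ℝ)) :=
        Submodule.finrank_mono h
    _ ≤ A.rank + B.rank := Submodule.finrank_add_le_finrank_add_finrank _ _

/-- A Frobenius-type rank inequality: if `P * C * Q = 0` then
`rank (P*C) + rank (C*Q) ≤ rank C`. -/
lemma rank_frobenius {m n m' n' : Type*} [Fintype m] [Fintype n] [Fintype m'] [Fintype n']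
    (P : Matrix m' m ℝ) (C : Matrix m n ℝ) (Q : Matrix n n' ℝ)
    (h : P * C * Q = 0) : (P * C).rank + (C * Q).rank ≤ C.rank := by
  classical
  set p : Submodule ℝ (m → ℝ) := LinearMap.range C.mulVecLin with hp
  set g := P.mulVecLin.domRestrict p with hg
  have hrn : Module.finrank ℝ (LinearMap.range g) + Module.finrank ℝ (LinearMap.ker g)
      = Module.finrank ℝ p := g.finrank_range_add_finrank_ker
  have h1 : LinearMap.range g = LinearMap.range ((P * C).mulVecLin) := by
    rw [hg, LinearMap.range_domRestrict, Matrix.mulVecLin_mul, LinearMap.range_comp]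
  have hker : Module.finrank ℝ (LinearMap.ker g)
      = Module.finrank ℝ (p ⊓ LinearMap.ker P.mulVecLin : Submodule ℝ (m → ℝ)) := by
    rw [hg, LinearMap.ker_domRestrict]
    have e := Submodule.equivMapOfInjective p.subtype (Submodule.injective_subtype p)
      (Submodule.comap p.subtype (LinearMap.ker P.mulVecLin))
    rw [Submodule.map_comap_subtype] at e
    exact e.finrank_eq
  have hle : LinearMap.range ((C * Q).mulVecLin) ≤ p ⊓ LinearMap.ker P.mulVecLin := by
    refine le_inf ?_ ?_
    · rw [Matrix.mulVecLin_mul]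
      exact LinearMap.range_comp_le_range _ _
    · rintro x ⟨y, rfl⟩
      simp only [LinearMap.mem_ker, mulVecLin_apply]
      have : (P * (C * Q)).mulVec y = 0 := by
        rw [← Matrix.mul_assoc, h, Matrix.zero_mulVec]
      rwa [Matrix.mulVec_mulVec]
  have h2 : (C * Q).rank ≤ Module.finrank ℝ (LinearMap.ker g) := by
    rw [hker]
    exact Submodule.finrank_mono hle
  calc (P * C).rank + (C * Q).rank
      ≤ Module.finrank ℝ (LinearMap.range g) + Module.finrank ℝ (LinearMap.ker g) := by
        rw [h1]; exact Nat.add_le_add_left h2 _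
    _ = C.rank := hrn

/-- If some `2 × 2` minor of `M` is nonzero, then `M` has rank at least two. -/
lemma two_le_rank_of_minor {m n : Type*} [Fintype m] [Fintype n] [DecidableEq m] [DecidableEq n]
    (M : Matrix m n ℝ) (i0 i1 : m) (j0 j1 : n)
    (h : M i0 j0 * M i1 j1 - M i0 j1 * M i1 j0 ≠ 0) : 2 ≤ M.rank := by
  classical
  set M' := (sel (![i0, i1] : Fin 2 → m))ᵀ * M * sel (![j0, j1] : Fin 2 → n) with hM'
  have hent : ∀ a b, M' a b = M (![i0, i1] a) (![j0, j1] b) := by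
    intro a b
    rw [hM', mul_sel_apply, selT_mul_apply]
  have hdet : M'.det ≠ 0 := by
    rw [Matrix.det_fin_two, hent, hent, hent, hent]
    simpa using h
  have hrank : M'.rank = 2 := by
    have := Matrix.rank_of_isUnit M'
      ((Matrix.isUnit_iff_isUnit_det M').2 (isUnit_iff_ne_zero.2 hdet))
    simpa using this
  calc (2 : ℕ) = M'.rank := hrank.symm
    _ ≤ (M * sel (![j0, j1] : Fin 2 → n)).rank := by
        rw [hM', Matrix.mul_assoc]
        exact Matrix.rank_mul_le_right _ _
    _ ≤ M.rank := Matrix.rank_mul_le_left _ _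

/-- The key nondegeneracy: `Č_K` cannot have rank `≤ 1` unless `(ň, v̌) = 0`. -/
lemma two_le_rank_CKmat (n : Matrix (Fin 3) (Fin 3) ℝ) (v : Fin 3 → ℝ)
    (hnsym : n.IsSymm) (hntr : n.trace = 0) (hnz : ¬ (n = 0 ∧ v = 0)) :
    2 ≤ (CKmat n v).rank := by
  by_contra hlt
  push_neg at hlt
  have hm : ∀ (i0 i1 : Fin 3) (j0 j1 : Unit ⊕ Fin 3),
      CKmat n v i0 j0 * CKmat n v i1 j1 - CKmat n v i0 j1 * CKmat n v i1 j0 = 0 := by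
    intro i0 i1 j0 j1
    by_contra hne
    exact absurd (two_le_rank_of_minor _ _ _ _ _ hne) (by omega)
  have hs10 : n 1 0 = n 0 1 := hnsym.apply 0 1
  have hs20 : n 2 0 = n 0 2 := hnsym.apply 0 2
  have hs21 : n 2 1 = n 1 2 := hnsym.apply 1 2
  have htr : n 0 0 + n 1 1 + n 2 2 = 0 := by
    simpa [Matrix.trace, Fin.sum_univ_three, Matrix.diag] using hntr
  have e1 := hm 1 2 (Sum.inl ()) (Sum.inr 0)
  have e2 := hm 2 0 (Sum.inl ()) (Sum.inr 1)
  have e3 := hm 0 1 (Sum.inl ()) (Sum.inr 2)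
  simp [CKmat, Lmat, eps, Fin.sum_univ_three] at e1 e2 e3
  have hvsq : v 0 ^ 2 + v 1 ^ 2 + v 2 ^ 2 = 0 := by
    linear_combination (1/4)*e1 + (1/4)*e2 + (1/4)*e3 + (1/2)*(v 1)*hs20
      - (1/2)*(v 2)*hs10 - (1/2)*(v 0)*hs21
  have key : ∀ x : ℝ, x ^ 2 ≤ 0 → x = 0 := fun x hx =>
    sq_eq_zero_iff.mp (le_antisymm hx (sq_nonneg x))
  have hv0 : v 0 = 0 := by
    refine key _ ?_
    nlinarith [sq_nonneg (v 1), sq_nonneg (v 2)]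
  have hv1 : v 1 = 0 := by
    refine key _ ?_
    nlinarith [sq_nonneg (v 0), sq_nonneg (v 2)]
  have hv2 : v 2 = 0 := by
    refine key _ ?_
    nlinarith [sq_nonneg (v 0), sq_nonneg (v 1)]
  have m1 := hm 0 1 (Sum.inr 0) (Sum.inr 1)
  have m2 := hm 0 2 (Sum.inr 0) (Sum.inr 2)
  have m3 := hm 1 2 (Sum.inr 1) (Sum.inr 2)
  simp [CKmat, Lmat, eps, Fin.sum_univ_three, hv0, hv1, hv2] at m1 m2 m3
  have G : (n 0 0)^2 + (n 1 1)^2 + (n 0 0 + n 1 1)^2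
      + 2*(n 0 1)^2 + 2*(n 0 2)^2 + 2*(n 1 2)^2 = 0 := by
    linear_combination (-2)*m1 + (-2)*m2 + (-2)*m3 - 2*(n 0 1)*hs10 - 2*(n 0 2)*hs20
      - 2*(n 1 2)*hs21 + (2*(n 0 0)+2*(n 1 1))*htr
  have ha : n 0 0 = 0 := by
    refine key _ ?_
    nlinarith [sq_nonneg (n 0 0 + n 1 1), sq_nonneg (n 1 1), sq_nonneg (n 0 1),
      sq_nonneg (n 0 2), sq_nonneg (n 1 2)]
  have hd : n 1 1 = 0 := by
    refine key _ ?_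
    nlinarith [sq_nonneg (n 0 0 + n 1 1), sq_nonneg (n 0 0), sq_nonneg (n 0 1),
      sq_nonneg (n 0 2), sq_nonneg (n 1 2)]
  have hb : n 0 1 = 0 := by
    refine key _ ?_
    nlinarith [sq_nonneg (n 0 0 + n 1 1), sq_nonneg (n 0 0), sq_nonneg (n 1 1),
      sq_nonneg (n 0 2), sq_nonneg (n 1 2)]
  have hc : n 0 2 = 0 := by
    refine key _ ?_
    nlinarith [sq_nonneg (n 0 0 + n 1 1), sq_nonneg (n 0 0), sq_nonneg (n 1 1),
      sq_nonneg (n 0 1), sq_nonneg (n 1 2)]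
  have he : n 1 2 = 0 := by
    refine key _ ?_
    nlinarith [sq_nonneg (n 0 0 + n 1 1), sq_nonneg (n 0 0), sq_nonneg (n 1 1),
      sq_nonneg (n 0 1), sq_nonneg (n 0 2)]
  apply hnz
  clear hm e1 e2 e3 m1 m2 m3 hvsq G hnz hnsym hntr key hlt
  constructor
  · ext i j
    fin_cases i <;> fin_cases j <;> simp_all
  · funext i
    fin_cases i <;> simp_all

/-- For a 5D type III Weyl operator:
`4 ≤ 2 rank(Č_K) ≤ rank C ≤ 3 + rank(Č_K) ≤ 6`, and `rank(Č_K) ∈ {2, 3}`. -/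
theorem stmt7 (n : Matrix (Fin 3) (Fin 3) ℝ) (v : Fin 3 → ℝ)
    (H : Matrix (Fin 3) (Fin 3) ℝ)
    (hnsym : n.IsSymm) (hntr : n.trace = 0)
    (hHsym : H.IsSymm) (hHtr : H.trace = 0)
    (hnz : ¬ (n = 0 ∧ v = 0)) :
    4 ≤ 2 * (CKmat n v).rank ∧
    2 * (CKmat n v).rank ≤ (weylIII n v H).rank ∧
    (weylIII n v H).rank ≤ 3 + (CKmat n v).rank ∧
    3 + (CKmat n v).rank ≤ 6 ∧
    ((CKmat n v).rank = 2 ∨ (CKmat n v).rank = 3) := by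
  classical
  set C := weylIII n v H with hC
  set CK := CKmat n v with hCK
  set CmK := CmKmat n v with hCmK
  -- selector maps
  have hCK2 : 2 ≤ CK.rank := two_le_rank_CKmat n v hnsym hntr hnz
  have hCK3 : CK.rank ≤ 3 := by
    simpa using CK.rank_le_card_height
  -- relation between `CK` and `CmK`
  have hD : CmK = CK * Matrix.diagonal (Sum.elim (fun _ => (-1 : ℝ)) fun _ => 1) := by
    ext i j
    erw [Matrix.mul_diagonal]
    rcases j with u | m
    · simp [hCK, hCmK, CKmat, CmKmat]
    · simp [hCK, hCmK, CKmat, CmKmat]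
  have hD' : CK = CmK * Matrix.diagonal (Sum.elim (fun _ => (-1 : ℝ)) fun _ => 1) := by
    ext i j
    erw [Matrix.mul_diagonal]
    rcases j with u | m
    · simp [hCK, hCmK, CKmat, CmKmat]
    · simp [hCK, hCmK, CKmat, CmKmat]
  have hrank_mK_le : CmK.rank ≤ CK.rank := by
    rw [hD]; exact Matrix.rank_mul_le_left _ _
  have hrank_K_le : CK.rank ≤ CmK.rank := by
    rw [hD']; exact Matrix.rank_mul_le_left _ _
  -- Upper bound: rank C ≤ 3 + rank CK
  have hupper : C.rank ≤ 3 + CK.rank := by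
    have hdecomp : C = (C * sel (Sum.inl : Fin 3 → BivIdx)) * (sel (Sum.inl : Fin 3 → BivIdx))ᵀ
        + (C * sel (Sum.inr ∘ Sum.inl : (Unit ⊕ Fin 3) → BivIdx))
          * (sel (Sum.inr ∘ Sum.inl : (Unit ⊕ Fin 3) → BivIdx))ᵀ := by
      ext i j
      simp only [Matrix.add_apply, Matrix.mul_apply, Matrix.transpose_apply, mul_sel_apply]
      rcases j with u | j'
      · simp [sel, Fintype.sum_sum_type]
      · rcases j' with w | a
        · simp [sel, Fintype.sum_sum_type]
        · have : C i (Sum.inr (Sum.inr a)) = 0 := by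
            rcases i with u | i' <;> [skip; rcases i' with w | b] <;> simp [hC, weylIII]
          simp [sel, this]
    have h1 : ((C * sel (Sum.inl : Fin 3 → BivIdx)) * (sel (Sum.inl : Fin 3 → BivIdx))ᵀ).rank
        ≤ 3 := by
      refine le_trans (Matrix.rank_mul_le_left _ _) ?_
      simpa using (C * sel (Sum.inl : Fin 3 → BivIdx)).rank_le_card_width
    have h2 : ((C * sel (Sum.inr ∘ Sum.inl : (Unit ⊕ Fin 3) → BivIdx))
        * (sel (Sum.inr ∘ Sum.inl : (Unit ⊕ Fin 3) → BivIdx))ᵀ).rank ≤ CK.rank := by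
      refine le_trans (Matrix.rank_mul_le_left _ _) ?_
      have hfact : C * sel (Sum.inr ∘ Sum.inl : (Unit ⊕ Fin 3) → BivIdx)
          = sel (Sum.inr ∘ Sum.inr : Fin 3 → BivIdx) * CmK := by
        ext i w
        rw [mul_sel_apply]
        rcases i with u | i'
        · simp [hC, weylIII, sel, Matrix.mul_apply]
        · rcases i' with w' | a
          · simp [hC, weylIII, sel, Matrix.mul_apply]
          · simp [hC, hCmK, weylIII, sel, Matrix.mul_apply]
      rw [hfact]
      exact le_trans (Matrix.rank_mul_le_right _ _) hrank_mK_le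
    have hr := rank_add_le' (C * sel (Sum.inl : Fin 3 → BivIdx) * (sel (Sum.inl : Fin 3 → BivIdx))ᵀ)
      ((C * sel (Sum.inr ∘ Sum.inl : (Unit ⊕ Fin 3) → BivIdx))
        * (sel (Sum.inr ∘ Sum.inl : (Unit ⊕ Fin 3) → BivIdx))ᵀ)
    rw [← hdecomp] at hr
    exact le_trans hr (Nat.add_le_add h1 h2)
  -- Lower bound: 2 * rank CK ≤ rank C
  have hlower : 2 * CK.rank ≤ C.rank := by
    set P := (sel (Sum.inr ∘ Sum.inl : (Unit ⊕ Fin 3) → BivIdx))ᵀ with hP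
    set Q := sel (Sum.inr ∘ Sum.inl : (Unit ⊕ Fin 3) → BivIdx) with hQ
    have hzero : P * C * Q = 0 := by
      ext w w'
      rw [mul_sel_apply, hP, selT_mul_apply]
      simp [hC, weylIII]
    have hPC : CK.rank ≤ (P * C).rank := by
      have hfact : CKᵀ = (P * C) * sel (Sum.inl : Fin 3 → BivIdx) := by
        ext w u
        rw [mul_sel_apply, hP, selT_mul_apply]
        simp [hC, hCK, weylIII]
      calc CK.rank = CKᵀ.rank := (Matrix.rank_transpose CK).symm
        _ ≤ (P * C).rank := by rw [hfact]; exact Matrix.rank_mul_le_left _ _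
    have hCQ : CK.rank ≤ (C * Q).rank := by
      have hfact : CmK = (sel (Sum.inr ∘ Sum.inr : Fin 3 → BivIdx))ᵀ * (C * Q) := by
        ext a w
        rw [selT_mul_apply, hQ, mul_sel_apply]
        simp [hC, hCmK, weylIII]
      refine le_trans hrank_K_le ?_
      rw [hfact]
      exact Matrix.rank_mul_le_right _ _
    have := rank_frobenius P C Q hzero
    omega
  refine ⟨by omega, hlower, hupper, by omega, by omega⟩
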